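/- arXiv:1604.01843 — 3 statements merged into one kernel-verified Lean document; each statement's English description precedes it below -/
import Mathlib

section
/- For a finite canonical ensemble with m ≥ 1 microstates and energies E : Fin m → ℝ, let Z(β) = Σ_i exp(−β E_i) and P_i(β) = exp(−β E_i)/Z(β). Then for every β ∈ ℝ, the second derivative of β ↦ ln Z(β) exists and equals the energy fluctuation (variance): (d²/dβ²) ln Z(β) = Σ_i P_i(β) E_i² − (Σ_i P_i(β) E_i)², and this quantity is nonnegative: σ(β) = ⟨E²⟩(β) − (⟨E⟩(β))² ≥ 0. -/
open Real Finset

private lemma Zpos (m : ℕ) (hm : 1 ≤ m) (E : Fin m → ℝ) (b : ℝ) :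
    0 < ∑ i, Real.exp (-b * E i) := by
  apply Finset.sum_pos (fun i _ => Real.exp_pos _)
  exact Finset.univ_nonempty_iff.mpr (Fin.pos_iff_nonempty.mp hm)

private lemma hZ (m : ℕ) (E : Fin m → ℝ) (b : ℝ) :
    HasDerivAt (fun b : ℝ => ∑ i, Real.exp (-b * E i))
      (∑ i, -E i * Real.exp (-b * E i)) b := by
  apply HasDerivAt.fun_sum
  intro i _
  have h1 : HasDerivAt (fun b : ℝ => -b * E i) (-E i) b := by
    simpa using ((hasDerivAt_id b).neg.mul_const (E i))
  simpa [mul_comm] using h1.exp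

private lemma hZ' (m : ℕ) (E : Fin m → ℝ) (b : ℝ) :
    HasDerivAt (fun b : ℝ => ∑ i, -E i * Real.exp (-b * E i))
      (∑ i, E i ^ 2 * Real.exp (-b * E i)) b := by
  apply HasDerivAt.fun_sum
  intro i _
  have h1 : HasDerivAt (fun b : ℝ => -b * E i) (-E i) b := by
    simpa using ((hasDerivAt_id b).neg.mul_const (E i))
  have := (h1.exp).const_mul (-E i)
  convert this using 1
  case e'_9 => ring
  case e'_4 => rfl

/-- For a finite canonical ensemble, the second derivative of `β ↦ ln Z(β)` exists
and equals the energy fluctuation `σ(β) = ⟨E²⟩ − ⟨E⟩²`, which is nonnegative. -/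
theorem second_deriv_log_partition_eq_energy_fluctuation
    (m : ℕ) (hm : 1 ≤ m) (E : Fin m → ℝ) (β : ℝ) :
    HasDerivAt (deriv (fun b : ℝ => Real.log (∑ i, Real.exp (-b * E i))))
      ((∑ i, (Real.exp (-β * E i) / ∑ j, Real.exp (-β * E j)) * E i ^ 2)
        - (∑ i, (Real.exp (-β * E i) / ∑ j, Real.exp (-β * E j)) * E i) ^ 2) β ∧
    0 ≤ (∑ i, (Real.exp (-β * E i) / ∑ j, Real.exp (-β * E j)) * E i ^ 2)
        - (∑ i, (Real.exp (-β * E i) / ∑ j, Real.exp (-β * E j)) * E i) ^ 2 := by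
  set Z : ℝ → ℝ := fun b => ∑ i, Real.exp (-b * E i) with hZdef
  have hpos : ∀ b, 0 < Z b := Zpos m hm E
  have hderiv : deriv (fun b : ℝ => Real.log (∑ i, Real.exp (-b * E i)))
      = fun b => (∑ i, -E i * Real.exp (-b * E i)) / Z b := by
    funext b
    exact ((hZ m E b).log (hpos b).ne').deriv
  constructor
  · rw [hderiv]
    have hd : HasDerivAt (fun b => (∑ i, -E i * Real.exp (-b * E i)) / Z b)
        (((∑ i, E i ^ 2 * Real.exp (-β * E i)) * Z β
          - (∑ i, -E i * Real.exp (-β * E i)) * (∑ i, -E i * Real.exp (-β * E i))) / Z β ^ 2) β :=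
      (hZ' m E β).div (hZ m E β) (hpos β).ne'
    convert hd using 1
    have hZβ := (hpos β).ne'
    have e1 : ∑ i, (Real.exp (-β * E i) / Z β) * E i ^ 2
        = (∑ i, E i ^ 2 * Real.exp (-β * E i)) / Z β := by
      rw [Finset.sum_div]
      exact Finset.sum_congr rfl fun i _ => by ring
    have e2 : ∑ i, (Real.exp (-β * E i) / Z β) * E i
        = (∑ i, E i * Real.exp (-β * E i)) / Z β := by
      rw [Finset.sum_div]
      exact Finset.sum_congr rfl fun i _ => by ring
    have e3 : ∑ i, -E i * Real.exp (-β * E i) = -∑ i, E i * Real.exp (-β * E i) := by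
      simp [neg_mul]
    rw [e1, e2, e3]
    field_simp
    simp only [mul_comm β]
    ring
  · set P : Fin m → ℝ := fun i => Real.exp (-β * E i) / Z β with hP
    have hPnn : ∀ i, 0 ≤ P i := fun i => div_nonneg (Real.exp_pos _).le (hpos β).le
    have hPsum : ∑ i, P i = 1 := by
      rw [← Finset.sum_div]
      exact div_self (hpos β).ne'
    have key := Finset.sum_mul_sq_le_sq_mul_sq Finset.univ
      (fun i => Real.sqrt (P i)) (fun i => Real.sqrt (P i) * E i)
    have h1 : ∀ i : Fin m, Real.sqrt (P i) * (Real.sqrt (P i) * E i) = P i * E i := by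
      intro i
      rw [← mul_assoc, Real.mul_self_sqrt (hPnn i)]
    have h2 : ∀ i : Fin m, Real.sqrt (P i) ^ 2 = P i := fun i => Real.sq_sqrt (hPnn i)
    have h3 : ∀ i : Fin m, (Real.sqrt (P i) * E i) ^ 2 = P i * E i ^ 2 := by
      intro i; rw [mul_pow, h2]
    simp only [h1, h2, h3, hPsum, one_mul] at key
    linarith
end

section
/- For a finite canonical ensemble with m ≥ 1 microstates and energies E : Fin m → ℝ, let Z(β) = Σ_i exp(−β E_i) and define the thermal entropy S(β) = ln Z(β) − β · (d/dβ) ln Z(β). Then for every β ∈ ℝ, S is differentiable at β with S'(β) = − β · σ(β), where σ(β) = Σ_i P_i(β) E_i² − (Σ_i P_i(β) E_i)² is the energy fluctuation; in particular S'(β) ≤ 0 whenever β ≥ 0, so the entropy is nonincreasing in the inverse temperature. -/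
open Real Finset

/-- For a finite canonical ensemble, the thermal entropy
`S(β) = ln Z(β) − β ∂_β ln Z(β)` is differentiable with `S'(β) = −β σ(β)`,
where `σ(β)` is the energy fluctuation; in particular `S'(β) ≤ 0` for `β ≥ 0`. -/
theorem entropy_deriv_eq_neg_beta_fluctuation
    (m : ℕ) (hm : 1 ≤ m) (E : Fin m → ℝ) (β : ℝ) :
    HasDerivAt
      (fun b : ℝ => Real.log (∑ i, Real.exp (-b * E i))
        - b * deriv (fun b' : ℝ => Real.log (∑ i, Real.exp (-b' * E i))) b)
      (-(β * ((∑ i, (Real.exp (-β * E i) / ∑ j, Real.exp (-β * E j)) * E i ^ 2)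
        - (∑ i, (Real.exp (-β * E i) / ∑ j, Real.exp (-β * E j)) * E i) ^ 2))) β ∧
    (0 ≤ β →
      -(β * ((∑ i, (Real.exp (-β * E i) / ∑ j, Real.exp (-β * E j)) * E i ^ 2)
        - (∑ i, (Real.exp (-β * E i) / ∑ j, Real.exp (-β * E j)) * E i) ^ 2)) ≤ 0) := by
  have hne : Nonempty (Fin m) := Fin.pos_iff_nonempty.mp hm
  set Z : ℝ → ℝ := fun b => ∑ i, Real.exp (-b * E i) with hZ
  set F : ℝ → ℝ := fun b => ∑ i, Real.exp (-b * E i) * (-E i) with hF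
  set G : ℝ → ℝ := fun b => ∑ i, Real.exp (-b * E i) * (E i)^2 with hG
  have hZpos : ∀ b, 0 < Z b := fun b =>
    Finset.sum_pos (fun i _ => Real.exp_pos _) Finset.univ_nonempty
  have hZne : ∀ b, Z b ≠ 0 := fun b => (hZpos b).ne'
  have hexp : ∀ (b : ℝ) (i : Fin m), HasDerivAt (fun b : ℝ => Real.exp (-b * E i))
      (Real.exp (-b * E i) * (-E i)) b := by
    intro b i
    have h1 : HasDerivAt (fun b : ℝ => -b * E i) (-E i) b := by
      simpa using ((hasDerivAt_id b).neg.mul_const (E i))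
    exact h1.exp
  have hZd : ∀ b, HasDerivAt Z (F b) b := fun b =>
    HasDerivAt.fun_sum (fun i _ => hexp b i)
  have hFd : ∀ b, HasDerivAt F (G b) b := by
    intro b
    have : ∀ i ∈ Finset.univ, HasDerivAt (fun b : ℝ => Real.exp (-b * E i) * (-E i))
        (Real.exp (-b * E i) * (E i)^2) b := by
      intro i _
      have := (hexp b i).mul_const (-E i)
      refine this.congr_deriv ?_
      ring
    exact HasDerivAt.fun_sum this
  have hlogd : ∀ b, HasDerivAt (fun b' => Real.log (Z b')) (F b / Z b) b := fun b =>
    (hZd b).log (hZne b)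
  have hgeq : deriv (fun b' : ℝ => Real.log (∑ i, Real.exp (-b' * E i)))
      = fun b => F b / Z b := by
    funext b
    exact (hlogd b).deriv
  have hSd : HasDerivAt (fun b : ℝ => Real.log (Z b) - b * (F b / Z b))
      (F β / Z β - (1 * (F β / Z β) + β * ((G β * Z β - F β * F β) / (Z β)^2))) β := by
    exact (hlogd β).sub ((hasDerivAt_id β).mul ((hFd β).div (hZd β) (hZne β)))
  constructor
  · have heq : (fun b : ℝ => Real.log (∑ i, Real.exp (-b * E i))
        - b * deriv (fun b' : ℝ => Real.log (∑ i, Real.exp (-b' * E i))) b)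
        = fun b : ℝ => Real.log (Z b) - b * (F b / Z b) := by
      funext b; rw [hgeq]
    rw [heq]
    convert hSd using 1
    have h1 : (∑ i, (Real.exp (-β * E i) / ∑ j, Real.exp (-β * E j)) * E i ^ 2)
        = G β / Z β := by
      rw [hG, hZ, Finset.sum_div]
      exact Finset.sum_congr rfl (fun i _ => by ring)
    have h2 : (∑ i, (Real.exp (-β * E i) / ∑ j, Real.exp (-β * E j)) * E i)
        = -(F β / Z β) := by
      simp only [hF, hZ]
      rw [Finset.sum_div, ← Finset.sum_neg_distrib]
      exact Finset.sum_congr rfl (fun i _ => by ring)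
    rw [h1, h2]
    have := hZne β
    field_simp
    ring
  · intro hβ
    have hsum : (∑ i, Real.exp (-β * E i) / ∑ j, Real.exp (-β * E j)) = 1 := by
      rw [← Finset.sum_div, div_self (hZne β)]
    set P : Fin m → ℝ := fun i => Real.exp (-β * E i) / ∑ j, Real.exp (-β * E j) with hP
    have hPnn : ∀ i, 0 ≤ P i := fun i =>
      div_nonneg (Real.exp_pos _).le (hZpos β).le
    have key : (∑ i, P i * E i) ^ 2 ≤ ∑ i, P i * E i ^ 2 := by
      have h := Finset.sum_mul_sq_le_sq_mul_sq Finset.univ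
        (fun i => Real.sqrt (P i)) (fun i => Real.sqrt (P i) * E i)
      have e1 : ∀ i : Fin m, Real.sqrt (P i) * (Real.sqrt (P i) * E i) = P i * E i := by
        intro i
        rw [← mul_assoc, Real.mul_self_sqrt (hPnn i)]
      have e2 : ∀ i : Fin m, Real.sqrt (P i) ^ 2 = P i := fun i => Real.sq_sqrt (hPnn i)
      have e3 : ∀ i : Fin m, (Real.sqrt (P i) * E i) ^ 2 = P i * E i ^ 2 := by
        intro i
        rw [mul_pow, e2]
      simp only [e1, e2, e3] at h
      rw [hsum, one_mul] at h
      exact h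
    have hσ : 0 ≤ (∑ i, P i * E i ^ 2) - (∑ i, P i * E i) ^ 2 := sub_nonneg.mpr key
    have : 0 ≤ β * ((∑ i, P i * E i ^ 2) - (∑ i, P i * E i) ^ 2) := mul_nonneg hβ hσ
    simpa [hP] using neg_nonpos.mpr this
end

section
/- For a finite canonical ensemble with m ≥ 1 microstates and energies E : Fin m → ℝ, let Z(β) = Σ_i exp(−β E_i) and define the entropy as a function of absolute temperature T > 0 by Ŝ(T) = (d/dT)(T · ln Z(1/T)). Then for every T > 0, Ŝ is differentiable at T with Ŝ'(T) = σ(1/T)/T³, where σ(β) = Σ_i P_i(β) E_i² − (Σ_i P_i(β) E_i)²; in particular Ŝ'(T) ≥ 0, so the entropy is nondecreasing in the temperature. -/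
open Finset

lemma aux_Zpos (m : ℕ) (hm : 1 ≤ m) (E : Fin m → ℝ) (β : ℝ) :
    0 < ∑ i, Real.exp (-β * E i) := by
  have : Nonempty (Fin m) := Fin.pos_iff_nonempty.mp hm
  exact Finset.sum_pos (fun i _ => Real.exp_pos _) Finset.univ_nonempty

lemma aux_hZ (m : ℕ) (E : Fin m → ℝ) (β : ℝ) :
    HasDerivAt (fun b => ∑ i, Real.exp (-b * E i))
      (∑ i, -E i * Real.exp (-β * E i)) β := by
  apply HasDerivAt.fun_sum
  intro i _
  have h1 : HasDerivAt (fun b : ℝ => -b * E i) (-E i) β := by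
    simpa using ((hasDerivAt_id β).neg.mul_const (E i))
  simpa [mul_comm] using h1.exp

lemma aux_hZ1 (m : ℕ) (E : Fin m → ℝ) (β : ℝ) :
    HasDerivAt (fun b => ∑ i, -E i * Real.exp (-b * E i))
      (∑ i, E i ^ 2 * Real.exp (-β * E i)) β := by
  apply HasDerivAt.fun_sum
  intro i _
  have h1 : HasDerivAt (fun b : ℝ => -b * E i) (-E i) β := by
    simpa using ((hasDerivAt_id β).neg.mul_const (E i))
  have := (h1.exp).const_mul (-E i)
  convert this using 1
  case e'_4 => exact rfl
  ring

lemma aux_cs (m : ℕ) (E : Fin m → ℝ) (β : ℝ) :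
    (∑ i, E i * Real.exp (-β * E i)) ^ 2
      ≤ (∑ i, Real.exp (-β * E i)) * ∑ i, E i ^ 2 * Real.exp (-β * E i) := by
  have h := Finset.sum_mul_sq_le_sq_mul_sq Finset.univ
    (fun i => Real.exp (-β * E i / 2)) (fun i => E i * Real.exp (-β * E i / 2))
  have e1 : ∀ i : Fin m, Real.exp (-β * E i / 2) * (E i * Real.exp (-β * E i / 2))
      = E i * Real.exp (-β * E i) := by
    intro i
    rw [mul_comm (Real.exp _), mul_assoc, ← Real.exp_add]
    ring_nf
  have e2 : ∀ i : Fin m, Real.exp (-β * E i / 2) ^ 2 = Real.exp (-β * E i) := by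
    intro i
    rw [sq, ← Real.exp_add]; ring_nf
  have e3 : ∀ i : Fin m, (E i * Real.exp (-β * E i / 2)) ^ 2
      = E i ^ 2 * Real.exp (-β * E i) := by
    intro i
    rw [mul_pow, e2]
  calc (∑ i, E i * Real.exp (-β * E i)) ^ 2
      = (∑ i, Real.exp (-β * E i / 2) * (E i * Real.exp (-β * E i / 2))) ^ 2 := by
        congr 1; exact Finset.sum_congr rfl fun i _ => (e1 i).symm
    _ ≤ (∑ i, Real.exp (-β * E i / 2) ^ 2) * ∑ i, (E i * Real.exp (-β * E i / 2)) ^ 2 := h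
    _ = _ := by
        congr 1
        · exact Finset.sum_congr rfl fun i _ => e2 i
        · exact Finset.sum_congr rfl fun i _ => e3 i

/-- For a finite canonical ensemble, the entropy as a function of absolute
temperature, `Ŝ(T) = ∂_T (T ln Z(1/T))`, is differentiable for `T > 0` with
`Ŝ'(T) = σ(1/T)/T³ ≥ 0`: the entropy is nondecreasing in the temperature. -/
theorem entropy_nondecreasing_in_temperature
    (m : ℕ) (hm : 1 ≤ m) (E : Fin m → ℝ) (T : ℝ) (hT : 0 < T) :
    HasDerivAt
      (fun T' : ℝ => deriv (fun T'' : ℝ =>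
        T'' * Real.log (∑ i, Real.exp (-(1 / T'') * E i))) T')
      (((∑ i, (Real.exp (-(1 / T) * E i) / ∑ j, Real.exp (-(1 / T) * E j)) * E i ^ 2)
        - (∑ i, (Real.exp (-(1 / T) * E i) / ∑ j, Real.exp (-(1 / T) * E j)) * E i) ^ 2)
        / T ^ 3) T ∧
    0 ≤ ((∑ i, (Real.exp (-(1 / T) * E i) / ∑ j, Real.exp (-(1 / T) * E j)) * E i ^ 2)
        - (∑ i, (Real.exp (-(1 / T) * E i) / ∑ j, Real.exp (-(1 / T) * E j)) * E i) ^ 2)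
        / T ^ 3 := by
  set Z : ℝ → ℝ := fun b => ∑ i, Real.exp (-b * E i) with hZdef
  set Z1 : ℝ → ℝ := fun b => ∑ i, -E i * Real.exp (-b * E i) with hZ1def
  set Z2 : ℝ → ℝ := fun b => ∑ i, E i ^ 2 * Real.exp (-b * E i) with hZ2def
  have hZpos : ∀ b, 0 < Z b := fun b => aux_Zpos m hm E b
  -- the closed form of the first derivative
  set g : ℝ → ℝ := fun T' => Real.log (Z (1 / T')) - Z1 (1 / T') / (Z (1 / T') * T')
    with hgdef
  -- for every positive T', the inside function has derivative g T'
  have key : ∀ T' : ℝ, 0 < T' →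
      HasDerivAt (fun T'' : ℝ =>
        T'' * Real.log (∑ i, Real.exp (-(1 / T'') * E i))) (g T') T' := by
    intro T' hT'
    have hne : T' ≠ 0 := hT'.ne'
    have hinv : HasDerivAt (fun x : ℝ => 1 / x) (-1 / T' ^ 2) T' := by
      simpa [one_div, neg_div] using hasDerivAt_inv hne
    have hZc : HasDerivAt (fun x => Z (1 / x)) (Z1 (1 / T') * (-1 / T' ^ 2)) T' :=
      (aux_hZ m E (1 / T')).comp T' hinv
    have hlog : HasDerivAt (fun x => Real.log (Z (1 / x)))
        (Z1 (1 / T') * (-1 / T' ^ 2) / Z (1 / T')) T' :=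
      hZc.log (hZpos _).ne'
    have hmul : HasDerivAt (fun x => x * Real.log (Z (1 / x)))
        (1 * Real.log (Z (1 / T')) + T' * (Z1 (1 / T') * (-1 / T' ^ 2) / Z (1 / T'))) T' :=
      (hasDerivAt_id T').mul hlog
    have heq : (fun x : ℝ => x * Real.log (Z (1/x)))
        = fun T'' : ℝ => T'' * Real.log (∑ i, Real.exp (-(1 / T'') * E i)) := by
      funext x; simp [hZdef]
    rw [heq] at hmul
    convert hmul using 1
    simp only [hgdef]
    have hZne : Z (1 / T') ≠ 0 := (hZpos _).ne'
    field_simp [hne, hZne]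
    ring
  -- eventually, deriv of the inner function equals g
  have hev : ∀ᶠ T' in nhds T, (0:ℝ) < T' := eventually_gt_nhds hT
  have heq : (fun T' : ℝ => deriv (fun T'' : ℝ =>
        T'' * Real.log (∑ i, Real.exp (-(1 / T'') * E i))) T') =ᶠ[nhds T] g :=
    hev.mono fun T' hT' => (key T' hT').deriv
  -- derivative of g at T
  have hne : T ≠ 0 := hT.ne'
  have hinv : HasDerivAt (fun x : ℝ => 1 / x) (-1 / T ^ 2) T := by
    simpa [one_div, neg_div] using hasDerivAt_inv hne
  have hZc : HasDerivAt (fun x => Z (1 / x)) (Z1 (1 / T) * (-1 / T ^ 2)) T :=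
    (aux_hZ m E (1 / T)).comp T hinv
  have hZ1c : HasDerivAt (fun x => Z1 (1 / x)) (Z2 (1 / T) * (-1 / T ^ 2)) T :=
    (aux_hZ1 m E (1 / T)).comp T hinv
  have hlog : HasDerivAt (fun x => Real.log (Z (1 / x)))
      (Z1 (1 / T) * (-1 / T ^ 2) / Z (1 / T)) T := hZc.log (hZpos _).ne'
  have hden : HasDerivAt (fun x => Z (1 / x) * x)
      (Z1 (1 / T) * (-1 / T ^ 2) * T + Z (1 / T) * 1) T := hZc.mul (hasDerivAt_id T)
  have hdenne : Z (1 / T) * T ≠ 0 := mul_ne_zero (hZpos _).ne' hne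
  have hquot : HasDerivAt (fun x => Z1 (1 / x) / (Z (1 / x) * x))
      ((Z2 (1 / T) * (-1 / T ^ 2) * (Z (1 / T) * T)
        - Z1 (1 / T) * (Z1 (1 / T) * (-1 / T ^ 2) * T + Z (1 / T) * 1))
        / (Z (1 / T) * T) ^ 2) T := hZ1c.div hden hdenne
  have hg : HasDerivAt g
      (Z1 (1 / T) * (-1 / T ^ 2) / Z (1 / T)
        - (Z2 (1 / T) * (-1 / T ^ 2) * (Z (1 / T) * T)
        - Z1 (1 / T) * (Z1 (1 / T) * (-1 / T ^ 2) * T + Z (1 / T) * 1))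
        / (Z (1 / T) * T) ^ 2) T := hlog.sub hquot
  -- rewrite the target sums in terms of Z, Z1, Z2
  have hsum2 : (∑ i, (Real.exp (-(1 / T) * E i) / ∑ j, Real.exp (-(1 / T) * E j)) * E i ^ 2)
      = Z2 (1 / T) / Z (1 / T) := by
    have hz2 : Z2 (1 / T) = ∑ i, E i ^ 2 * Real.exp (-(1 / T) * E i) := rfl
    rw [hz2]
    simp only [div_mul_eq_mul_div]
    rw [← Finset.sum_div]
    congr 1
    exact Finset.sum_congr rfl fun i _ => by ring
  have hnegZ1 : -Z1 (1 / T) = ∑ i, E i * Real.exp (-(1 / T) * E i) := by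
    have hz1 : Z1 (1 / T) = ∑ i, -E i * Real.exp (-(1 / T) * E i) := rfl
    rw [hz1, ← Finset.sum_neg_distrib]
    exact Finset.sum_congr rfl fun i _ => by ring
  have hsum1 : (∑ i, (Real.exp (-(1 / T) * E i) / ∑ j, Real.exp (-(1 / T) * E j)) * E i)
      = -Z1 (1 / T) / Z (1 / T) := by
    rw [hnegZ1]
    simp only [div_mul_eq_mul_div]
    rw [← Finset.sum_div]
    congr 1
    exact Finset.sum_congr rfl fun i _ => by ring
  constructor
  · refine HasDerivAt.congr_of_eventuallyEq ?_ heq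
    convert hg using 1
    case e'_4 => exact rfl
    case e'_5 => exact rfl
    rw [hsum1, hsum2]
    have h1 : Z (1 / T) ≠ 0 := (hZpos _).ne'
    field_simp [h1, hne]
    ring
  · rw [hsum1, hsum2]
    have h1 : 0 < Z (1 / T) := hZpos _
    have hcs := aux_cs m E (1 / T)
    apply div_nonneg _ (by positivity)
    have key2 : Z2 (1 / T) / Z (1 / T) - (-Z1 (1 / T) / Z (1 / T)) ^ 2
        = (Z (1 / T) * Z2 (1 / T) - (-Z1 (1 / T)) ^ 2) / Z (1 / T) ^ 2 := by
      field_simp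
    rw [key2]
    apply div_nonneg _ (by positivity)
    rw [sub_nonneg, hnegZ1]
    exact hcs
end
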